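/- Let D be a balanced Ferrers board, i.e., a Young diagram in which the number of cells (i, j) with i + j even equals the number of cells with i + j odd. Then for every subset S of the cells of D with i + j even, the neighborhood N(S) — the set of cells of D that are edge-adjacent to some cell of S — satisfies |N(S)| ≥ |S| (Hall's condition holds for the bipartite adjacency graph of D). -/

import Mathlib

/-- Two cells of `ℕ × ℕ` are edge-adjacent: they differ by exactly 1 in one
coordinate and agree in the other. -/
abbrev CellAdj (a b : ℕ × ℕ) : Prop :=
  (a.1 = b.1 ∧ (a.2 + 1 = b.2 ∨ b.2 + 1 = a.2)) ∨
  (a.2 = b.2 ∧ (a.1 + 1 = b.1 ∨ b.1 + 1 = a.1))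

/-- `B` is balanced: the number of cells `(i, j)` with `i + j` even equals the
number of cells with `i + j` odd. -/
def IsBalanced (B : Finset (ℕ × ℕ)) : Prop :=
  (B.filter fun c => (c.1 + c.2) % 2 = 0).card =
  (B.filter fun c => (c.1 + c.2) % 2 = 1).card

namespace FH
open Finset

def Lower (D : Finset (ℕ × ℕ)) : Prop :=
  ∀ i j i' j', (i, j) ∈ D → i' ≤ i → j' ≤ j → (i', j') ∈ D

lemma nat_lower_mem (s : Finset ℕ) (h : ∀ x ∈ s, ∀ y, y ≤ x → y ∈ s) (i : ℕ) :
    i ∈ s ↔ i < s.card := by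
  constructor
  · intro hi
    have hsub : Finset.range (i+1) ⊆ s := fun y hy =>
      h i hi y (Nat.lt_succ_iff.mp (mem_range.mp hy))
    have := card_le_card hsub
    simpa [card_range] using this
  · intro hi
    by_contra hni
    have hsub : s ⊆ range i := by
      intro x hx
      refine mem_range.mpr ?_
      by_contra h'
      exact hni (h x hx i (le_of_not_gt h'))
    have := card_le_card hsub
    simp [card_range] at this
    omega

def lam (D : Finset (ℕ × ℕ)) (j : ℕ) : ℕ :=
  ((D.filter fun c => c.2 = j).image Prod.fst).card

lemma mem_iff_lt_lam (D : Finset (ℕ × ℕ)) (hD : Lower D) (i j : ℕ) :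
    (i, j) ∈ D ↔ i < lam D j := by
  have hmem : ∀ x, x ∈ ((D.filter fun c => c.2 = j).image Prod.fst) ↔ (x, j) ∈ D := by
    intro x
    simp only [mem_image, mem_filter]
    constructor
    · rintro ⟨⟨a, b⟩, ⟨haD, hb⟩, rfl⟩
      exact hb ▸ haD
    · intro hx; exact ⟨(x, j), ⟨hx, rfl⟩, rfl⟩
  have := nat_lower_mem ((D.filter fun c => c.2 = j).image Prod.fst)
    (by intro x hx y hy; exact (hmem y).mpr (hD x j y j ((hmem x).mp hx) hy le_rfl)) i
  rw [lam, ← this, hmem]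

lemma lam_anti (D : Finset (ℕ × ℕ)) (hD : Lower D) {j j' : ℕ} (h : j ≤ j') :
    lam D j' ≤ lam D j := by
  by_contra h'
  have h1 : (lam D j, j') ∈ D := (mem_iff_lt_lam D hD _ _).mpr (by omega)
  have h2 := hD _ _ (lam D j) j h1 le_rfl h
  rw [mem_iff_lt_lam D hD] at h2
  omega

def T (m : ℕ) : Finset (ℕ × ℕ) :=
  (Finset.range m ×ˢ Finset.range m).filter fun c => c.1 + c.2 < m

lemma mem_T (m : ℕ) (c : ℕ × ℕ) : c ∈ T m ↔ c.1 + c.2 < m := by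
  obtain ⟨i, j⟩ := c
  simp only [T, mem_filter, mem_product, mem_range]
  omega

def Dg (m : ℕ) : Finset (ℕ × ℕ) := (Finset.range (m+1)).image (fun i => (i, m - i))

lemma mem_Dg (m : ℕ) (c : ℕ × ℕ) : c ∈ Dg m ↔ c.1 + c.2 = m := by
  obtain ⟨i, j⟩ := c
  simp only [Dg, mem_image, mem_range, Prod.mk.injEq]
  constructor
  · rintro ⟨x, hx, rfl, rfl⟩; omega
  · rintro h; exact ⟨i, by omega, rfl, by omega⟩

lemma card_Dg (m : ℕ) : (Dg m).card = m + 1 := by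
  rw [Dg, Finset.card_image_of_injective, card_range]
  intro a b h
  exact congrArg Prod.fst h

lemma T_succ (m : ℕ) : T (m+1) = T m ∪ Dg m := by
  ext c
  simp only [mem_T, mem_union, mem_Dg]
  omega

lemma T_disj (m : ℕ) : Disjoint (T m) (Dg m) := by
  rw [Finset.disjoint_left]
  intro c hc hc'
  rw [mem_T] at hc; rw [mem_Dg] at hc'
  omega

lemma stair_count (m : ℕ) :
    (if m % 2 = 0
      then ((T m).filter fun c => (c.1+c.2) % 2 = 1).card
            = ((T m).filter fun c => (c.1+c.2) % 2 = 0).card + m / 2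
      else ((T m).filter fun c => (c.1+c.2) % 2 = 0).card
            = ((T m).filter fun c => (c.1+c.2) % 2 = 1).card + (m+1) / 2) := by
  induction m with
  | zero => simp [T]
  | succ m ih =>
    have hE : ((T (m+1)).filter fun c => (c.1+c.2) % 2 = 0).card
        = ((T m).filter fun c => (c.1+c.2) % 2 = 0).card
          + ((Dg m).filter fun c => (c.1+c.2) % 2 = 0).card := by
      rw [T_succ, filter_union, card_union_of_disjoint]
      exact Finset.disjoint_filter_filter (T_disj m)
    have hO : ((T (m+1)).filter fun c => (c.1+c.2) % 2 = 1).card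
        = ((T m).filter fun c => (c.1+c.2) % 2 = 1).card
          + ((Dg m).filter fun c => (c.1+c.2) % 2 = 1).card := by
      rw [T_succ, filter_union, card_union_of_disjoint]
      exact Finset.disjoint_filter_filter (T_disj m)
    have hDgE : ((Dg m).filter fun c => (c.1+c.2) % 2 = 0).card
        = if m % 2 = 0 then m + 1 else 0 := by
      by_cases h : m % 2 = 0
      · rw [if_pos h, filter_true_of_mem, card_Dg]
        intro c hc; rw [mem_Dg] at hc; omega
      · rw [if_neg h, Finset.card_eq_zero, filter_false_of_mem]
        intro c hc; rw [mem_Dg] at hc; omega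
    have hDgO : ((Dg m).filter fun c => (c.1+c.2) % 2 = 1).card
        = if m % 2 = 1 then m + 1 else 0 := by
      by_cases h : m % 2 = 1
      · rw [if_pos h, filter_true_of_mem, card_Dg]
        intro c hc; rw [mem_Dg] at hc; omega
      · rw [if_neg h, Finset.card_eq_zero, filter_false_of_mem]
        intro c hc; rw [mem_Dg] at hc; omega
    rw [hDgE] at hE; rw [hDgO] at hO
    by_cases h : m % 2 = 0
    · rw [if_pos h] at ih
      rw [if_neg (by omega : ¬ (m+1) % 2 = 0)]
      rw [if_pos h] at hE
      rw [if_neg (by omega : ¬ m % 2 = 1)] at hO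
      omega
    · rw [if_neg h] at ih
      rw [if_pos (by omega : (m+1) % 2 = 0)]
      rw [if_neg h] at hE
      rw [if_pos (by omega : m % 2 = 1)] at hO
      omega

lemma stair_unbalanced (m : ℕ) (hm : 0 < m) :
    ((T m).filter fun c => (c.1+c.2) % 2 = 0).card
      ≠ ((T m).filter fun c => (c.1+c.2) % 2 = 1).card := by
  have := stair_count m
  by_cases h : m % 2 = 0 <;> simp only [h, reduceIte] at this <;> omega

lemma lower_pair_horiz (D : Finset (ℕ × ℕ)) (hD : Lower D) (j L : ℕ) (hL : lam D j = L)
    (hgap : lam D (j+1) + 2 ≤ L) :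
    Lower ((D.erase (L-2, j)).erase (L-1, j)) := by
  intro i₁ j₁ i' j' hmem hi hj
  simp only [mem_erase] at hmem ⊢
  obtain ⟨hne1, hne2, hmemD⟩ := hmem
  have hlt1 : i₁ < lam D j₁ := (mem_iff_lt_lam D hD _ _).mp hmemD
  have key : ¬ (L - 2 ≤ i' ∧ j' = j) := by
    rintro ⟨h1, h2⟩
    have hj1 : j₁ = j := by
      by_contra hne'
      have h3 : lam D j₁ ≤ lam D (j+1) := lam_anti D hD (by omega)
      omega
    have hL1 : lam D j₁ = L := by rw [hj1, hL]
    rcases (by omega : i₁ = L - 2 ∨ i₁ = L - 1) with h | h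
    · exact hne2 (by simp only [Prod.mk.injEq]; omega)
    · exact hne1 (by simp only [Prod.mk.injEq]; omega)
  refine ⟨?_, ?_, hD _ _ _ _ hmemD hi hj⟩
  · intro h1; simp only [Prod.mk.injEq] at h1; exact key ⟨by omega, by omega⟩
  · intro h1; simp only [Prod.mk.injEq] at h1; exact key ⟨by omega, by omega⟩

lemma lower_pair_vert (D : Finset (ℕ × ℕ)) (hD : Lower D) (j L : ℕ) (hL : lam D j = L)
    (heq : lam D (j+1) = L) (hpos : 0 < L) (hlt : lam D (j+2) < L) :
    Lower ((D.erase (L-1, j)).erase (L-1, j+1)) := by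
  intro i₁ j₁ i' j' hmem hi hj
  simp only [mem_erase] at hmem ⊢
  obtain ⟨hne1, hne2, hmemD⟩ := hmem
  have hlt1 : i₁ < lam D j₁ := (mem_iff_lt_lam D hD _ _).mp hmemD
  have key : ¬ (i' = L - 1 ∧ (j' = j ∨ j' = j + 1)) := by
    rintro ⟨h0, hj'⟩
    have hj1 : j₁ = j ∨ j₁ = j + 1 := by
      by_contra hne'
      have h3 : lam D j₁ ≤ lam D (j+2) := lam_anti D hD (by omega)
      omega
    have hlam : lam D j₁ = L := by rcases hj1 with h | h <;> rw [h] <;> assumption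
    have hi₁ : i₁ = L - 1 := by omega
    rcases hj1 with h | h
    · exact hne2 (by simp only [Prod.mk.injEq]; omega)
    · exact hne1 (by simp only [Prod.mk.injEq]; omega)
  refine ⟨?_, ?_, hD _ _ _ _ hmemD hi hj⟩
  · intro h1; simp only [Prod.mk.injEq] at h1; exact key ⟨h1.1, Or.inr h1.2⟩
  · intro h1; simp only [Prod.mk.injEq] at h1; exact key ⟨h1.1, Or.inl h1.2⟩

lemma erase_erase_comm {α : Type*} [DecidableEq α] (s : Finset α) (a b : α) :
    (s.erase a).erase b = (s.erase b).erase a := by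
  ext x; simp only [mem_erase]; tauto

lemma lam_pos_bound (D : Finset (ℕ × ℕ)) (hD : Lower D) (j : ℕ) (h : 0 < lam D j) :
    j ≤ D.sup Prod.snd := by
  have : (0, j) ∈ D := (mem_iff_lt_lam D hD 0 j).mpr h
  exact Finset.le_sup (f := Prod.snd) this

lemma exists_domino (D : Finset (ℕ × ℕ)) (hD : Lower D) :
    (∃ a b : ℕ × ℕ, a ∈ D ∧ b ∈ D ∧ a ≠ b ∧ CellAdj a b ∧
      (a.1 + a.2) % 2 = 0 ∧ (b.1 + b.2) % 2 = 1 ∧ Lower ((D.erase a).erase b))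
    ∨ D = T (lam D 0) := by
  by_cases hH : ∃ j, lam D (j+1) + 2 ≤ lam D j
  · left
    obtain ⟨j, hj⟩ := hH
    set L := lam D j with hL
    have hL2 : 2 ≤ L := by omega
    have hc1 : (L-2, j) ∈ D := (mem_iff_lt_lam D hD _ _).mpr (by omega)
    have hc2 : (L-1, j) ∈ D := (mem_iff_lt_lam D hD _ _).mpr (by omega)
    have hlow : Lower ((D.erase (L-2, j)).erase (L-1, j)) :=
      lower_pair_horiz D hD j L rfl hj
    have hadj1 : CellAdj (L-2, j) (L-1, j) := Or.inr ⟨rfl, Or.inl (by omega)⟩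
    have hadj2 : CellAdj (L-1, j) (L-2, j) := Or.inr ⟨rfl, Or.inr (by omega)⟩
    have hne12 : ((L-2 : ℕ), j) ≠ ((L-1 : ℕ), j) := by
      simp only [ne_eq, Prod.mk.injEq]; omega
    by_cases hpar : (L - 2 + j) % 2 = 0
    · exact ⟨(L-2, j), (L-1, j), hc1, hc2, hne12, hadj1, hpar, by simp; omega, hlow⟩
    · refine ⟨(L-1, j), (L-2, j), hc2, hc1, hne12.symm, hadj2, by simp; omega,
        by simp; omega, ?_⟩
      rw [erase_erase_comm]; exact hlow
  · by_cases hV : ∃ j, lam D j = lam D (j+1) ∧ 0 < lam D j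
    · left
      set N := D.sup Prod.snd with hN
      set F := (Finset.range (N+1)).filter
        (fun j => lam D j = lam D (j+1) ∧ 0 < lam D j) with hF
      have hFne : F.Nonempty := by
        obtain ⟨j, hj1, hj2⟩ := hV
        exact ⟨j, by
          simp only [hF, mem_filter, mem_range]
          exact ⟨by have := lam_pos_bound D hD j hj2; omega, hj1, hj2⟩⟩
      set j := F.max' hFne with hjdef
      have hjF : j ∈ F := F.max'_mem hFne
      simp only [hF, mem_filter, mem_range] at hjF
      obtain ⟨hjN, heq, hpos⟩ := hjF
      set L := lam D j with hL
      have hpos1 : 0 < lam D (j+1) := by omega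
      have hlt : lam D (j+2) < lam D (j+1) := by
        have hle : lam D (j+2) ≤ lam D (j+1) := lam_anti D hD (by omega)
        rcases lt_or_eq_of_le hle with h | h
        · exact h
        · exfalso
          have hmem : j + 1 ∈ F := by
            simp only [hF, mem_filter, mem_range]
            exact ⟨by have := lam_pos_bound D hD (j+1) hpos1; omega, h.symm, hpos1⟩
          have := F.le_max' (j+1) hmem
          omega
      have hc1 : (L-1, j) ∈ D := (mem_iff_lt_lam D hD _ _).mpr (by omega)
      have hc2 : (L-1, j+1) ∈ D := (mem_iff_lt_lam D hD _ _).mpr (by omega)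
      have hlow : Lower ((D.erase (L-1, j)).erase (L-1, j+1)) :=
        lower_pair_vert D hD j L rfl heq.symm hpos (by omega)
      have hadj1 : CellAdj (L-1, j) (L-1, j+1) := Or.inl ⟨rfl, Or.inl rfl⟩
      have hadj2 : CellAdj (L-1, j+1) (L-1, j) := Or.inl ⟨rfl, Or.inr rfl⟩
      have hne12 : ((L-1 : ℕ), j) ≠ ((L-1 : ℕ), j+1) := by
        simp only [ne_eq, Prod.mk.injEq]; omega
      by_cases hpar : (L - 1 + j) % 2 = 0
      · exact ⟨(L-1, j), (L-1, j+1), hc1, hc2, hne12, hadj1, hpar, by simp; omega, hlow⟩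
      · refine ⟨(L-1, j+1), (L-1, j), hc2, hc1, hne12.symm, hadj2, by simp; omega,
          by simp; omega, ?_⟩
        rw [erase_erase_comm]; exact hlow
    · right
      push_neg at hH hV
      have key : ∀ j, lam D j = lam D 0 - j := by
        intro j
        induction j with
        | zero => simp
        | succ j ih =>
          have ha : lam D (j+1) ≤ lam D j := lam_anti D hD (by omega)
          have h1 := hH j
          by_cases h0 : lam D j = 0
          · omega
          · have h2 : lam D j ≠ lam D (j+1) := by
              intro h; exact h0 (by have := hV j h; omega)
            omega
      ext ⟨i, jj⟩
      rw [mem_iff_lt_lam D hD, mem_T]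
      have := key jj
      omega

lemma balanced_erase (D : Finset (ℕ × ℕ)) (a b : ℕ × ℕ) (ha : a ∈ D) (hb : b ∈ D)
    (hpa : (a.1 + a.2) % 2 = 0) (hpb : (b.1 + b.2) % 2 = 1) (hbal : IsBalanced D) :
    IsBalanced ((D.erase a).erase b) := by
  have hE : ((D.erase a).erase b).filter (fun c => (c.1 + c.2) % 2 = 0)
      = (D.filter fun c => (c.1 + c.2) % 2 = 0).erase a := by
    ext c
    simp only [mem_filter, mem_erase]
    constructor
    · rintro ⟨⟨hcb, hca, hcD⟩, hpc⟩; exact ⟨hca, hcD, hpc⟩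
    · rintro ⟨hca, hcD, hpc⟩
      refine ⟨⟨?_, hca, hcD⟩, hpc⟩
      intro h; rw [h] at hpc; omega
  have hO : ((D.erase a).erase b).filter (fun c => (c.1 + c.2) % 2 = 1)
      = (D.filter fun c => (c.1 + c.2) % 2 = 1).erase b := by
    ext c
    simp only [mem_filter, mem_erase]
    constructor
    · rintro ⟨⟨hcb, hca, hcD⟩, hpc⟩; exact ⟨hcb, hcD, hpc⟩
    · rintro ⟨hcb, hcD, hpc⟩
      refine ⟨⟨hcb, ?_, hcD⟩, hpc⟩
      intro h; rw [h] at hpc; omega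
  have haf : a ∈ D.filter fun c => (c.1 + c.2) % 2 = 0 := mem_filter.mpr ⟨ha, hpa⟩
  have hbf : b ∈ D.filter fun c => (c.1 + c.2) % 2 = 1 := mem_filter.mpr ⟨hb, hpb⟩
  have h1 := card_erase_of_mem haf
  have h2 := card_erase_of_mem hbf
  have h3 : 0 < (D.filter fun c => (c.1 + c.2) % 2 = 0).card := card_pos.mpr ⟨a, haf⟩
  unfold IsBalanced at hbal ⊢
  rw [hE, hO, h1, h2]
  omega

lemma matching : ∀ (n : ℕ) (D : Finset (ℕ × ℕ)), D.card ≤ n → Lower D → IsBalanced D →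
    ∃ f : ℕ × ℕ → ℕ × ℕ,
      (∀ c ∈ D.filter (fun c => (c.1 + c.2) % 2 = 0), f c ∈ D ∧ CellAdj c (f c)) ∧
      Set.InjOn f ↑(D.filter fun c => (c.1 + c.2) % 2 = 0) := by
  intro n
  induction n with
  | zero =>
    intro D hcard _ _
    have : D = ∅ := card_eq_zero.mp (Nat.le_zero.mp hcard)
    subst this
    exact ⟨id, by simp, by simp⟩
  | succ n ih =>
    intro D hcard hD hbal
    rcases D.eq_empty_or_nonempty with rfl | hne
    · exact ⟨id, by simp, by simp⟩
    rcases exists_domino D hD with ⟨a, b, ha, hb, hab, hadj, hpa, hpb, hlow⟩ | hT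
    · set D' := (D.erase a).erase b with hD'
      have hbD' : b ∉ D' := notMem_erase b _
      have haD' : a ∉ D' := fun h => (notMem_erase a _) (mem_of_mem_erase h)
      have hD'sub : D' ⊆ D := fun c hc => mem_of_mem_erase (mem_of_mem_erase hc)
      have hD'card : D'.card ≤ n := by
        have h1 : (D.erase a).card = D.card - 1 := card_erase_of_mem ha
        have hb' : b ∈ D.erase a := mem_erase.mpr ⟨fun h => hab h.symm, hb⟩
        have h2 : D'.card = (D.erase a).card - 1 := card_erase_of_mem hb'
        have h3 : 0 < D.card := card_pos.mpr hne
        omega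
      have hbal' := balanced_erase D a b ha hb hpa hpb hbal
      obtain ⟨f', hf'mem, hf'inj⟩ := ih D' hD'card hlow hbal'
      have hmem' : ∀ c, c ∈ D.filter (fun c => (c.1 + c.2) % 2 = 0) → c ≠ a →
          c ∈ D'.filter (fun c => (c.1 + c.2) % 2 = 0) := by
        intro c hc hca
        rw [mem_filter] at hc
        rw [mem_filter, hD', mem_erase, mem_erase]
        refine ⟨⟨?_, hca, hc.1⟩, hc.2⟩
        intro h; rw [h] at hc; omega
      refine ⟨fun c => if c = a then b else f' c, ?_, ?_⟩
      · intro c hc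
        dsimp only
        by_cases h : c = a
        · subst h; simp only [if_pos rfl]; exact ⟨hb, hadj⟩
        · rw [if_neg h]
          obtain ⟨h1, h2⟩ := hf'mem c (hmem' c hc h)
          exact ⟨hD'sub h1, h2⟩
      · intro x hx y hy hxy
        dsimp only at hxy
        rw [Finset.mem_coe] at hx hy
        by_cases hxa : x = a <;> by_cases hya : y = a
        · rw [hxa, hya]
        · exfalso
          rw [if_pos hxa, if_neg hya] at hxy
          have := (hf'mem y (hmem' y hy hya)).1
          rw [← hxy] at this
          exact hbD' this
        · exfalso
          rw [if_neg hxa, if_pos hya] at hxy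
          have := (hf'mem x (hmem' x hx hxa)).1
          rw [hxy] at this
          exact hbD' this
        · rw [if_neg hxa, if_neg hya] at hxy
          exact hf'inj (Finset.mem_coe.mpr (hmem' x hx hxa))
            (Finset.mem_coe.mpr (hmem' y hy hya)) hxy
    · exfalso
      have hm : 0 < lam D 0 := by
        obtain ⟨⟨i, j⟩, hij⟩ := hne
        have h00 : ((0 : ℕ), (0 : ℕ)) ∈ D := hD i j 0 0 hij (Nat.zero_le _) (Nat.zero_le _)
        exact Nat.pos_of_ne_zero (fun h => by
          rw [mem_iff_lt_lam D hD, h] at h00; omega)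
      have := hbal
      rw [hT] at this
      exact stair_unbalanced (lam D 0) hm this

end FH

/-- Hall's condition for a balanced Ferrers board: for every subset `S` of the
black cells (those `(i, j)` with `i + j` even) of a balanced Ferrers board `D`
(a finite lower set in `ℕ × ℕ`), the set of cells of `D` edge-adjacent to some
cell of `S` has at least `|S|` elements. -/
theorem ferrers_hall_condition (D : Finset (ℕ × ℕ))
    (hlower : ∀ i j i' j', (i, j) ∈ D → i' ≤ i → j' ≤ j → (i', j') ∈ D)
    (hbal : IsBalanced D)
    (S : Finset (ℕ × ℕ)) (hS : S ⊆ D.filter fun c => (c.1 + c.2) % 2 = 0) :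
    S.card ≤ (D.filter fun c => ∃ s ∈ S, CellAdj s c).card := by
  obtain ⟨f, hfmem, hfinj⟩ := FH.matching D.card D le_rfl hlower hbal
  have himg : S.image f ⊆ D.filter fun c => ∃ s ∈ S, CellAdj s c := by
    intro c hc
    obtain ⟨s, hs, rfl⟩ := Finset.mem_image.mp hc
    obtain ⟨h1, h2⟩ := hfmem s (hS hs)
    exact Finset.mem_filter.mpr ⟨h1, s, hs, h2⟩
  have hcard : (S.image f).card = S.card := by
    apply Finset.card_image_of_injOn
    exact Set.InjOn.mono (fun x hx => Finset.mem_coe.mpr (hS (Finset.mem_coe.mp hx))) hfinj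
  rw [← hcard]
  exact Finset.card_le_card himg
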